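/- arXiv:1310.3761 — 2 statements merged into one kernel-verified Lean document; each statement's English description precedes it below -/
import Mathlib

section
/- The sequence of probability distributions π^M with π^M(i) = K^M (β/α)^i / ((M+i) i!) converges in total variation, as M → ∞, to the Poisson distribution with parameter β/α. -/
open Filter Topology

/-- The distributions π^M(i) = K^M (β/α)^i / ((M+i) i!) converge in total variation,
as M → ∞, to the Poisson(β/α) distribution. -/
theorem stmt_6 (α β : ℝ) (hα : 0 < α) (hβ : 0 < β)
    (π : ℕ → ℕ → ℝ)
    (hπ : ∀ M i : ℕ, π M i =
      (∑' j : ℕ, (β / α) ^ j / (((M : ℝ) + j) * (Nat.factorial j)))⁻¹ *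
        (β / α) ^ i / (((M : ℝ) + i) * (Nat.factorial i))) :
    Filter.Tendsto
      (fun M : ℕ =>
        ∑' i : ℕ, |π M i - Real.exp (-(β / α)) * (β / α) ^ i / (Nat.factorial i)|)
      Filter.atTop (nhds 0) := by
  set r : ℝ := β / α with hr_def
  have hr : 0 < r := div_pos hβ hα
  have hbnd_sum : Summable (fun i : ℕ => r ^ i / (i.factorial : ℝ)) :=
    Real.summable_pow_div_factorial r
  have hbnd_nonneg : ∀ i : ℕ, 0 ≤ r ^ i / (i.factorial : ℝ) := fun i =>
    div_nonneg (pow_nonneg hr.le i) (Nat.cast_nonneg _)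
  have hexp : Real.exp r = ∑' i : ℕ, r ^ i / (i.factorial : ℝ) := by
    rw [Real.exp_eq_exp_ℝ, NormedSpace.exp_eq_tsum_div]
  set S : ℕ → ℝ := fun M => ∑' j : ℕ, r ^ j / (((M : ℝ) + j) * (j.factorial : ℝ)) with hS_def
  -- termwise bounds for S M when M ≥ 1
  have hterm_nonneg : ∀ (M j : ℕ), 0 ≤ r ^ j / (((M : ℝ) + j) * (j.factorial : ℝ)) := by
    intro M j
    apply div_nonneg (pow_nonneg hr.le j)
    positivity
  have hterm_le : ∀ (M j : ℕ), 1 ≤ M →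
      r ^ j / (((M : ℝ) + j) * (j.factorial : ℝ)) ≤ r ^ j / (j.factorial : ℝ) := by
    intro M j hM
    have hM1 : (1 : ℝ) ≤ (M : ℝ) := by exact_mod_cast hM
    have hfac : (0 : ℝ) < (j.factorial : ℝ) := by exact_mod_cast j.factorial_pos
    rw [div_le_div_iff₀ (by positivity) (by positivity)]
    have : (j.factorial : ℝ) ≤ ((M : ℝ) + j) * (j.factorial : ℝ) := by
      nlinarith [Nat.cast_nonneg (α := ℝ) j]
    nlinarith [pow_nonneg hr.le j]
  have hS_summable : ∀ M : ℕ, 1 ≤ M →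
      Summable (fun j : ℕ => r ^ j / (((M : ℝ) + j) * (j.factorial : ℝ))) := by
    intro M hM
    exact Summable.of_nonneg_of_le (hterm_nonneg M) (fun j => hterm_le M j hM) hbnd_sum
  have hS_lb : ∀ M : ℕ, 1 ≤ M → 1 / (M : ℝ) ≤ S M := by
    intro M hM
    have h0 : r ^ 0 / (((M : ℝ) + (0 : ℕ)) * ((Nat.factorial 0 : ℕ) : ℝ)) = 1 / (M : ℝ) := by
      simp
    calc (1 : ℝ) / M = r ^ 0 / (((M : ℝ) + (0 : ℕ)) * ((Nat.factorial 0 : ℕ) : ℝ)) := h0.symm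
      _ ≤ S M := Summable.le_tsum (hS_summable M hM) 0 (fun j _ => hterm_nonneg M j)
  have hS_pos : ∀ M : ℕ, 1 ≤ M → 0 < S M := by
    intro M hM
    have hMpos : (0 : ℝ) < M := by exact_mod_cast hM
    exact lt_of_lt_of_le (by positivity) (hS_lb M hM)
  -- M * S M → exp r
  have hMS : Tendsto (fun M : ℕ => (M : ℝ) * S M) atTop (𝓝 (Real.exp r)) := by
    have heq : ∀ M : ℕ, (M : ℝ) * S M =
        ∑' j : ℕ, ((M : ℝ) / ((M : ℝ) + j)) * (r ^ j / (j.factorial : ℝ)) := by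
      intro M
      rw [hS_def, ← tsum_mul_left]
      congr 1; funext j
      rcases eq_or_ne ((M : ℝ) + j) 0 with h | h
      · have hM0 : (M : ℝ) = 0 := by
          have := Nat.cast_nonneg (α := ℝ) M
          have := Nat.cast_nonneg (α := ℝ) j
          linarith
        simp [h, hM0]
      · have hfac : ((j.factorial : ℕ) : ℝ) ≠ 0 := by
          exact_mod_cast j.factorial_pos.ne'
        field_simp
        all_goals ring
    rw [hexp]
    have := tendsto_tsum_of_dominated_convergence (𝓕 := atTop)
      (f := fun (M : ℕ) (j : ℕ) => ((M : ℝ) / ((M : ℝ) + j)) * (r ^ j / (j.factorial : ℝ)))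
      (g := fun j : ℕ => r ^ j / (j.factorial : ℝ))
      (bound := fun j : ℕ => r ^ j / (j.factorial : ℝ))
      hbnd_sum
      (by
        intro j
        have h1 : Tendsto (fun M : ℕ => (M : ℝ) / ((M : ℝ) + j)) atTop (𝓝 1) :=
          tendsto_natCast_div_add_atTop (j : ℝ)
        have := h1.mul_const (r ^ j / (j.factorial : ℝ))
        simpa using this)
      (by
        filter_upwards with M j
        have hquot0 : 0 ≤ (M : ℝ) / ((M : ℝ) + j) := by positivity
        have hquot1 : (M : ℝ) / ((M : ℝ) + j) ≤ 1 := by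
          rcases eq_or_ne ((M : ℝ) + j) 0 with h | h
          · simp [h]
          · have hpos : (0 : ℝ) < (M : ℝ) + j := by
              have h1 : (0:ℝ) ≤ (M : ℝ) + j := by positivity
              exact lt_of_le_of_ne h1 (Ne.symm h)
            rw [div_le_one hpos]
            have := Nat.cast_nonneg (α := ℝ) j
            linarith
        rw [Real.norm_eq_abs, abs_mul, abs_of_nonneg hquot0,
          abs_of_nonneg (hbnd_nonneg j)]
        nlinarith [hbnd_nonneg j])
    exact Tendsto.congr (fun M => (heq M).symm) this
  -- pointwise convergence of π M i
  have hπ_lim : ∀ i : ℕ, Tendsto (fun M : ℕ => π M i) atTop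
      (𝓝 (Real.exp (-r) * r ^ i / (i.factorial : ℝ))) := by
    intro i
    have hfac : (0 : ℝ) < (i.factorial : ℝ) := by exact_mod_cast i.factorial_pos
    have hkey : Tendsto (fun M : ℕ =>
        ((M : ℝ) * S M)⁻¹ * ((M : ℝ) / ((M : ℝ) + i)) * (r ^ i / (i.factorial : ℝ)))
        atTop (𝓝 (Real.exp (-r) * r ^ i / (i.factorial : ℝ))) := by
      have hinv : Tendsto (fun M : ℕ => ((M : ℝ) * S M)⁻¹) atTop (𝓝 (Real.exp r)⁻¹) :=
        hMS.inv₀ (Real.exp_ne_zero r)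
      have h1 : Tendsto (fun M : ℕ => (M : ℝ) / ((M : ℝ) + i)) atTop (𝓝 1) :=
        tendsto_natCast_div_add_atTop (i : ℝ)
      have := (hinv.mul h1).mul_const (r ^ i / (i.factorial : ℝ))
      have hval : (Real.exp r)⁻¹ * 1 * (r ^ i / (i.factorial : ℝ))
          = Real.exp (-r) * r ^ i / (i.factorial : ℝ) := by
        rw [Real.exp_neg]; ring
      rwa [hval] at this
    apply hkey.congr'
    filter_upwards [eventually_ge_atTop 1] with M hM
    have hMpos : (0 : ℝ) < M := by exact_mod_cast hM
    have hSpos := hS_pos M hM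
    have hMi : (0 : ℝ) < (M : ℝ) + i := by
      have := Nat.cast_nonneg (α := ℝ) i
      linarith
    have hSM : (∑' j : ℕ, r ^ j / (((M : ℝ) + j) * (j.factorial : ℝ))) = S M := rfl
    rw [hπ M i, hSM]
    field_simp
  -- uniform (eventual) bound on |π M i - poisson i|
  have hπ_bound : ∀ᶠ M : ℕ in atTop, ∀ i : ℕ,
      ‖|π M i - Real.exp (-r) * r ^ i / (i.factorial : ℝ)|‖ ≤ 2 * (r ^ i / (i.factorial : ℝ)) := by
    filter_upwards [eventually_ge_atTop 1] with M hM i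
    have hMpos : (0 : ℝ) < M := by exact_mod_cast hM
    have hfac : (0 : ℝ) < (i.factorial : ℝ) := by exact_mod_cast i.factorial_pos
    have hSpos := hS_pos M hM
    have hMi : (0 : ℝ) < (M : ℝ) + i := by
      have := Nat.cast_nonneg (α := ℝ) i
      linarith
    have hSM : (∑' j : ℕ, r ^ j / (((M : ℝ) + j) * (j.factorial : ℝ))) = S M := rfl
    have hπ_nonneg : 0 ≤ π M i := by
      rw [hπ M i, hSM]
      have : 0 ≤ (S M)⁻¹ := inv_nonneg.2 hSpos.le
      positivity
    have hπ_le : π M i ≤ r ^ i / (i.factorial : ℝ) := by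
      rw [hπ M i, hSM]
      have hSinv : (S M)⁻¹ ≤ (M : ℝ) := by
        rw [inv_le_comm₀ hSpos hMpos]
        simpa [one_div] using hS_lb M hM
      calc (S M)⁻¹ * r ^ i / (((M : ℝ) + i) * (i.factorial : ℝ))
          ≤ (M : ℝ) * r ^ i / ((M : ℝ) * (i.factorial : ℝ)) := by
            apply div_le_div₀ (by positivity)
              (by nlinarith [pow_nonneg hr.le i, hSpos.le])
              (by positivity)
            nlinarith [Nat.cast_nonneg (α := ℝ) i]
        _ = r ^ i / (i.factorial : ℝ) := by
            field_simp
            all_goals ring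
    have hp_nonneg : 0 ≤ Real.exp (-r) * r ^ i / (i.factorial : ℝ) := by positivity
    have hp_le : Real.exp (-r) * r ^ i / (i.factorial : ℝ) ≤ r ^ i / (i.factorial : ℝ) := by
      have h1 : Real.exp (-r) ≤ 1 := Real.exp_le_one_iff.2 (by linarith)
      have := hbnd_nonneg i
      calc Real.exp (-r) * r ^ i / (i.factorial : ℝ)
          = Real.exp (-r) * (r ^ i / (i.factorial : ℝ)) := by ring
        _ ≤ 1 * (r ^ i / (i.factorial : ℝ)) := by nlinarith
        _ = r ^ i / (i.factorial : ℝ) := one_mul _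
    rw [Real.norm_eq_abs, abs_abs, abs_sub_le_iff]
    constructor <;> nlinarith
  -- conclude by dominated convergence for series
  have hzero : (0 : ℝ) = ∑' _ : ℕ, (0 : ℝ) := tsum_zero.symm
  rw [show (0 : ℝ) = ∑' _ : ℕ, (0 : ℝ) from tsum_zero.symm]
  exact tendsto_tsum_of_dominated_convergence (𝓕 := atTop)
    (f := fun (M : ℕ) (i : ℕ) => |π M i - Real.exp (-r) * r ^ i / (i.factorial : ℝ)|)
    (g := fun _ : ℕ => (0 : ℝ))
    (bound := fun i : ℕ => 2 * (r ^ i / (i.factorial : ℝ)))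
    (hbnd_sum.mul_left 2)
    (by
      intro i
      have h := ((hπ_lim i).sub (tendsto_const_nhds
        (x := Real.exp (-r) * r ^ i / (i.factorial : ℝ)))).abs
      simp only [sub_self, abs_zero] at h
      exact h)
    hπ_bound
end

section
/- Let A be the generator (Q-matrix) of a finite-state continuous-time Markov chain with transient class T and absorbing set, and let A_Q be the restriction of A to T × T. If every state of T can reach the absorbing set and T is irreducible, then there exists a unique probability vector π̃ on T with strictly positive entries and a real number θ < 0 such that π̃ A_Q = θ π̃. -/
open Matrix Finset
set_option linter.unusedSectionVars false
section
variable {T : Type*} [Fintype T] [DecidableEq T] [Nonempty T]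


variable {T : Type*} [Fintype T] [DecidableEq T] [Nonempty T]

-- entries of powers nonneg
lemma pf_pow_nonneg {B : Matrix T T ℝ} (hB : ∀ i j, 0 ≤ B i j) :
    ∀ m i j, 0 ≤ (B ^ m) i j := by
  intro m
  induction m with
  | zero => intro i j; simp [Matrix.one_apply]; positivity
  | succ m ih =>
    intro i j
    rw [pow_succ']
    exact Finset.sum_nonneg fun k _ => mul_nonneg (hB i k) (ih k j)

lemma pf_pow_mono {B : Matrix T T ℝ} (hB : ∀ i j, 0 ≤ B i j)
    (hd : ∀ i, 1 ≤ B i i) {a b : ℕ} (hab : a ≤ b) (i j : T) :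
    (B ^ a) i j ≤ (B ^ b) i j := by
  have key : ∀ m, (B ^ m) i j ≤ (B ^ (m + 1)) i j := by
    intro m
    rw [pow_succ']
    have h1 : B i i * (B ^ m) i j ≤ ∑ k, B i k * (B ^ m) k j :=
      Finset.single_le_sum (fun k _ => mul_nonneg (hB i k) (pf_pow_nonneg hB m k j))
        (Finset.mem_univ i)
    calc (B ^ m) i j ≤ B i i * (B ^ m) i j :=
          le_mul_of_one_le_left (pf_pow_nonneg hB m i j) (hd i)
      _ ≤ _ := h1
  exact monotone_nat_of_le_succ (f := fun m => (B ^ m) i j) key hab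

lemma pf_path_pos {B : Matrix T T ℝ} (hB : ∀ i j, 0 ≤ B i j)
    {r : T → T → Prop} (hr : ∀ a b, r a b → 0 < B b a)
    {i j : T} (h : Relation.ReflTransGen r i j) :
    ∃ m, 0 < (B ^ m) j i := by
  induction h with
  | refl => exact ⟨0, by simp [Matrix.one_apply]⟩
  | tail _ hbc ih =>
    obtain ⟨m, hm⟩ := ih
    refine ⟨m + 1, ?_⟩
    rw [pow_succ']
    rename_i b c _
    have h1 : B c b * (B ^ m) b i ≤ ∑ k, B c k * (B ^ m) k i :=
      Finset.single_le_sum (fun k _ => mul_nonneg (hB c k) (pf_pow_nonneg hB m k i))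
        (Finset.mem_univ b)
    exact lt_of_lt_of_le (mul_pos (hr _ _ hbc) hm) h1


lemma pf_global_pos {B : Matrix T T ℝ} (hB : ∀ i j, 0 ≤ B i j)
    (hd : ∀ i, 1 ≤ B i i) (hconn : ∀ i j : T, ∃ m, 0 < (B ^ m) i j) :
    ∃ m, ∀ i j, 0 < (B ^ m) i j := by
  choose f hf using hconn
  refine ⟨Finset.univ.sup fun i => Finset.univ.sup (f i), fun i j => ?_⟩
  have h1 : f i j ≤ Finset.univ.sup fun i => Finset.univ.sup (f i) :=
    le_trans (Finset.le_sup (Finset.mem_univ j))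
      (Finset.le_sup (f := fun i => Finset.univ.sup (f i)) (Finset.mem_univ i))
  exact lt_of_lt_of_le (hf i j) (pf_pow_mono hB hd h1 i j)

lemma pf_mulVec_pos {M : Matrix T T ℝ} (hM : ∀ i j, 0 < M i j)
    {v : T → ℝ} (hv : ∀ i, 0 ≤ v i) {j0 : T} (hj0 : 0 < v j0) (i : T) :
    0 < M.mulVec v i := by
  have h1 : M i j0 * v j0 ≤ ∑ k, M i k * v k :=
    Finset.single_le_sum (fun k _ => mul_nonneg (hM i k).le (hv k)) (Finset.mem_univ j0)
  exact lt_of_lt_of_le (mul_pos (hM i j0) hj0) h1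

/-- Comparison: θ ≤ θ' for positive left eigenvectors. -/
lemma pf_comp {A : Matrix T T ℝ} (hoff : ∀ i j, i ≠ j → 0 ≤ A i j)
    {π π' : T → ℝ} {θ θ' : ℝ} (hπ : ∀ i, 0 < π i) (hπ' : ∀ i, 0 < π' i)
    (e1 : Matrix.vecMul π A = θ • π) (e2 : Matrix.vecMul π' A = θ' • π') :
    θ ≤ θ' := by
  obtain ⟨i0, -, hi0⟩ := Finset.exists_min_image Finset.univ (fun i => π' i / π i)
    ⟨Classical.arbitrary T, Finset.mem_univ _⟩
  obtain ⟨s, hs⟩ : ∃ s, s = π' i0 / π i0 := ⟨_, rfl⟩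
  rw [← hs] at hi0
  have hsi0 : π' i0 = s * π i0 := by
    rw [hs, div_mul_cancel₀ _ (hπ i0).ne']
  have hge : ∀ i, s * π i ≤ π' i := fun i =>
    (le_div_iff₀ (hπ i)).mp (hi0 i (Finset.mem_univ i))
  have hspos : 0 < s := hs ▸ div_pos (hπ' i0) (hπ i0)
  have key : 0 ≤ ∑ i, (π' i - s * π i) * A i i0 := by
    refine Finset.sum_nonneg fun i _ => ?_
    rcases eq_or_ne i i0 with rfl | h
    · rw [hsi0]; ring_nf; simp
    · exact mul_nonneg (by linarith [hge i]) (hoff i i0 h)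
  have hc : ∑ i, (π' i - s * π i) * A i i0 = (θ' - θ) * π' i0 := by
    have h1 : ∑ i, π i * A i i0 = θ * π i0 := congrFun e1 i0
    have h2 : ∑ i, π' i * A i i0 = θ' * π' i0 := congrFun e2 i0
    have : ∑ i, (π' i - s * π i) * A i i0
        = (∑ i, π' i * A i i0) - s * ∑ i, π i * A i i0 := by
      rw [Finset.mul_sum, ← Finset.sum_sub_distrib]
      exact Finset.sum_congr rfl fun x _ => by ring
    rw [this, h1, h2, hsi0]; ring
  rw [hc] at key
  nlinarith [hπ' i0]


lemma pf_mulVec_lin (M : Matrix T T ℝ) (u v : T → ℝ) (r : ℝ) (i : T) :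
    M.mulVec (fun j => u j - r * v j) i = M.mulVec u i - r * M.mulVec v i := by
  show ∑ j, M i j * (u j - r * v j) = (∑ j, M i j * u j) - r * ∑ j, M i j * v j
  rw [Finset.mul_sum, ← Finset.sum_sub_distrib]
  exact Finset.sum_congr rfl fun j _ => by ring

/-- propagation lemma -/
lemma pf_step {A : Matrix T T ℝ} (hoff : ∀ i j, i ≠ j → 0 ≤ A i j)
    {π π' : T → ℝ} {θ s : ℝ}
    (e1 : Matrix.vecMul π A = θ • π) (e2 : Matrix.vecMul π' A = θ • π')
    (hge : ∀ i, s * π i ≤ π' i) {j : T} (hj : π' j = s * π j) :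
    ∀ k, k ≠ j → 0 < A k j → π' k = s * π k := by
  have h1 : ∑ i, π i * A i j = θ * π j := congrFun e1 j
  have h2 : ∑ i, π' i * A i j = θ * π' j := congrFun e2 j
  have hsum : ∑ i, (π' i - s * π i) * A i j = 0 := by
    have : ∑ i, (π' i - s * π i) * A i j
        = (∑ i, π' i * A i j) - s * ∑ i, π i * A i j := by
      rw [Finset.mul_sum, ← Finset.sum_sub_distrib]
      exact Finset.sum_congr rfl fun x _ => by ring
    rw [this, h1, h2, hj]; ring
  have hnn : ∀ i ∈ Finset.univ, 0 ≤ (π' i - s * π i) * A i j := by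
    intro i _
    rcases eq_or_ne i j with rfl | h
    · rw [hj]; ring_nf; simp
    · exact mul_nonneg (by linarith [hge i]) (hoff i j h)
  intro k hk hA
  have := (Finset.sum_eq_zero_iff_of_nonneg hnn).mp hsum k (Finset.mem_univ k)
  rcases mul_eq_zero.mp this with h | h
  · linarith
  · exact absurd h hA.ne'

end

/-- Perron–Frobenius for the restriction A_Q of the generator of a finite CTMC to an
irreducible transient class from which the absorbing set is reachable: there is a
unique strictly positive probability (left) eigenvector π̃ with π̃ A_Q = θ π̃, θ < 0. -/
theorem stmt_13 {T : Type*} [Fintype T] [DecidableEq T] [Nonempty T]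
    (A : Matrix T T ℝ)
    (hoff : ∀ i j, i ≠ j → 0 ≤ A i j)
    (hrow : ∀ i, ∑ j, A i j ≤ 0)
    (hsome : ∃ i, ∑ j, A i j < 0)
    (hirr : ∀ i j, Relation.ReflTransGen (fun a b => a ≠ b ∧ 0 < A a b) i j) :
    ∃ (π : T → ℝ) (θ : ℝ), (∀ i, 0 < π i) ∧ (∑ i, π i) = 1 ∧ θ < 0 ∧
      Matrix.vecMul π A = θ • π ∧
      ∀ (π' : T → ℝ) (θ' : ℝ), (∀ i, 0 < π' i) → (∑ i, π' i) = 1 →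
        Matrix.vecMul π' A = θ' • π' → π' = π ∧ θ' = θ := by
  -- the shift constant
  set c : ℝ := 1 + ∑ i, |A i i| with hc
  set B : Matrix T T ℝ := Aᵀ + c • (1 : Matrix T T ℝ) with hB
  have hBapp : ∀ i j, B i j = A j i + c * (if i = j then 1 else 0) := by
    intro i j
    simp [hB, Matrix.add_apply, Matrix.smul_apply, Matrix.one_apply, Matrix.transpose_apply]
  have hBnn : ∀ i j, 0 ≤ B i j := by
    intro i j
    rcases eq_or_ne i j with rfl | h
    · rw [hBapp]
      have : |A i i| ≤ ∑ k, |A k k| :=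
        Finset.single_le_sum (f := fun k => |A k k|) (fun k _ => abs_nonneg _) (Finset.mem_univ i)
      simp only [eq_self_iff_true, if_true, mul_one, hc]
      have := neg_abs_le (A i i)
      linarith
    · rw [hBapp, if_neg h, mul_zero, add_zero]
      exact hoff j i (Ne.symm h)
  have hBd : ∀ i, 1 ≤ B i i := by
    intro i
    rw [hBapp, if_pos rfl, mul_one, hc]
    have : |A i i| ≤ ∑ k, |A k k| :=
      Finset.single_le_sum (f := fun k => |A k k|) (fun k _ => abs_nonneg _) (Finset.mem_univ i)
    have := neg_abs_le (A i i)
    linarith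
  have hconn : ∀ i j : T, ∃ m, 0 < (B ^ m) i j := by
    intro i j
    refine pf_path_pos hBnn (r := fun a b => a ≠ b ∧ 0 < A a b) ?_ (hirr j i)
    intro a b ⟨hne, hpos⟩
    rw [hBapp, if_neg (Ne.symm hne), mul_zero, add_zero]
    exact hpos
  -- the mulVec/vecMul bridge
  have hbridge : ∀ (x : T → ℝ) i, B.mulVec x i = Matrix.vecMul x A i + c * x i := by
    intro x i
    rw [hB, Matrix.add_mulVec, Matrix.mulVec_transpose, Matrix.smul_mulVec,
      Matrix.one_mulVec]
    simp
  -- the compact feasible set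
  set Mb : ℝ := ∑ i, ∑ j, B i j with hMb
  set S : Set (ℝ × (T → ℝ)) := {p | 0 ≤ p.1 ∧ (∀ i, 0 ≤ p.2 i) ∧ (∑ i, p.2 i) = 1 ∧
    ∀ i, p.1 * p.2 i ≤ B.mulVec p.2 i} with hSdef
  have hmv : ∀ (x : T → ℝ) i, B.mulVec x i = ∑ j, B i j * x j := by
    intro x i; rfl
  have hxle1 : ∀ (x : T → ℝ), (∀ i, 0 ≤ x i) → (∑ i, x i) = 1 → ∀ j, x j ≤ 1 := by
    intro x hx hsum j
    rw [← hsum]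
    exact Finset.single_le_sum (fun k _ => hx k) (Finset.mem_univ j)
  have hbound : ∀ p ∈ S, p.1 ≤ Mb := by
    intro p hp
    obtain ⟨h0, hnn, hsum, hineq⟩ := hp
    calc p.1 = ∑ i, p.1 * p.2 i := by rw [← Finset.mul_sum, hsum, mul_one]
      _ ≤ ∑ i, B.mulVec p.2 i := Finset.sum_le_sum fun i _ => hineq i
      _ ≤ Mb := by
          rw [hMb]
          refine Finset.sum_le_sum fun i _ => ?_
          rw [hmv]
          exact Finset.sum_le_sum fun j _ =>
            mul_le_of_le_one_right (hBnn i j) (hxle1 _ hnn hsum j)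
  have hScl : IsClosed S := by
    have c1 : Continuous fun p : ℝ × (T → ℝ) => p.1 := continuous_fst
    have c2 : ∀ i, Continuous fun p : ℝ × (T → ℝ) => p.2 i :=
      fun i => (continuous_apply i).comp continuous_snd
    have c3 : ∀ i, Continuous fun p : ℝ × (T → ℝ) => B.mulVec p.2 i := by
      intro i
      have h : (fun p : ℝ × (T → ℝ) => B.mulVec p.2 i) =
          fun p => ∑ j, B i j * p.2 j := by
        funext p; exact hmv p.2 i
      rw [h]
      exact continuous_finset_sum _ fun j _ => (continuous_const.mul (c2 j))
    have h : S = {p | 0 ≤ p.1} ∩ ((⋂ i, {p | 0 ≤ p.2 i}) ∩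
        ({p : ℝ × (T → ℝ) | (∑ i, p.2 i) = 1} ∩ ⋂ i, {p | p.1 * p.2 i ≤ B.mulVec p.2 i})) := by
      ext p
      simp only [hSdef, Set.mem_setOf_eq, Set.mem_inter_iff, Set.mem_iInter]
    rw [h]
    refine (isClosed_le continuous_const c1).inter (IsClosed.inter ?_ (IsClosed.inter ?_ ?_))
    · exact isClosed_iInter fun i => isClosed_le continuous_const (c2 i)
    · exact isClosed_eq (continuous_finset_sum _ fun i _ => c2 i) continuous_const
    · exact isClosed_iInter fun i => isClosed_le (c1.mul (c2 i)) (c3 i)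
  have hSsub : S ⊆ Set.Icc 0 Mb ×ˢ Set.univ.pi fun _ : T => Set.Icc (0:ℝ) 1 := by
    intro p hp
    obtain ⟨h0, hnn, hsum, hineq⟩ := hp
    exact ⟨⟨h0, hbound p ⟨h0, hnn, hsum, hineq⟩⟩, fun i _ => ⟨hnn i, hxle1 _ hnn hsum i⟩⟩
  have hScomp : IsCompact S :=
    ((isCompact_Icc).prod (isCompact_univ_pi fun _ => isCompact_Icc)).of_isClosed_subset
      hScl hSsub
  have hcard : (0:ℝ) < Fintype.card T := by
    exact_mod_cast Fintype.card_pos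
  have hSne : S.Nonempty := by
    refine ⟨(0, fun _ => (Fintype.card T : ℝ)⁻¹), le_refl 0, fun i => by positivity, ?_, ?_⟩
    · rw [Finset.sum_const, Finset.card_univ, nsmul_eq_mul, mul_inv_cancel₀ hcard.ne']
    · intro i
      rw [zero_mul, hmv]
      exact Finset.sum_nonneg fun j _ => mul_nonneg (hBnn i j) (by positivity)
  obtain ⟨⟨r, z⟩, hrzS, hmax⟩ := hScomp.exists_isMaxOn hSne continuous_fst.continuousOn
  obtain ⟨hr0, hznn, hzsum, hzineq⟩ := hrzS
  obtain ⟨mstar, hM⟩ := pf_global_pos hBnn hBd hconn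
  obtain ⟨M, hMdef⟩ : ∃ M, M = B ^ mstar := ⟨_, rfl⟩
  rw [← hMdef] at hM
  have hzpos_ex : ∃ j0, 0 < z j0 := by
    by_contra h
    push_neg at h
    have h0 : ∑ i, z i ≤ 0 := Finset.sum_nonpos fun i _ => h i
    rw [hzsum] at h0; norm_num at h0
  obtain ⟨j0, hj0⟩ := hzpos_ex
  have hMz : ∀ i, 0 < M.mulVec z i := fun i => pf_mulVec_pos hM hznn hj0 i
  have hBz : ∀ i, B.mulVec z i = r * z i := by
    by_contra hne
    push_neg at hne
    obtain ⟨i1, hi1⟩ := hne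
    obtain ⟨d, hd⟩ : ∃ d, d = fun i => B.mulVec z i - r * z i := ⟨_, rfl⟩
    have hdnn : ∀ i, 0 ≤ d i := fun i => hd ▸ sub_nonneg.mpr (hzineq i)
    have hdi1 : 0 < d i1 := by
      rw [hd]
      refine lt_of_le_of_ne (sub_nonneg.mpr (hzineq i1)) fun h => hi1 ?_
      have h' : (0:ℝ) = (B *ᵥ z) i1 - r * z i1 := h
      linarith
    obtain ⟨w, hw⟩ : ∃ w, w = M.mulVec z := ⟨_, rfl⟩
    have hwpos : ∀ i, 0 < w i := hw ▸ hMz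
    have hMd : ∀ i, 0 < M.mulVec d i := fun i => pf_mulVec_pos hM hdnn hdi1 i
    have hcomm : ∀ i, M.mulVec d i = B.mulVec w i - r * w i := by
      intro i
      have h1 : B.mulVec w = M.mulVec (B.mulVec z) := by
        rw [hw, Matrix.mulVec_mulVec, Matrix.mulVec_mulVec, hMdef, ← pow_succ, ← pow_succ']
      rw [hd, pf_mulVec_lin, h1, hw]
    obtain ⟨i2, -, hi2⟩ := Finset.exists_min_image Finset.univ
      (fun i => M.mulVec d i / w i) ⟨Classical.arbitrary T, Finset.mem_univ _⟩
    obtain ⟨ε, hε⟩ : ∃ ε, ε = M.mulVec d i2 / w i2 := ⟨_, rfl⟩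
    rw [← hε] at hi2
    have hεpos : 0 < ε := hε ▸ div_pos (hMd i2) (hwpos i2)
    have hεle : ∀ i, (r + ε) * w i ≤ B.mulVec w i := by
      intro i
      have h1 : ε * w i ≤ M.mulVec d i :=
        (le_div_iff₀ (hwpos i)).mp (hi2 i (Finset.mem_univ i))
      have h2 := hcomm i
      linarith
    have hwsum : 0 < ∑ i, w i :=
      Finset.sum_pos (fun i _ => hwpos i) Finset.univ_nonempty
    have hmem : ((r + ε, fun i => (∑ k, w k)⁻¹ * w i) : ℝ × (T → ℝ)) ∈ S := by
      refine ⟨by linarith, fun i => mul_nonneg (inv_nonneg.mpr hwsum.le) (hwpos i).le, ?_, ?_⟩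
      · rw [← Finset.mul_sum, inv_mul_cancel₀ hwsum.ne']
      · intro i
        have h2 : B.mulVec (fun j => (∑ k, w k)⁻¹ * w j) i = (∑ k, w k)⁻¹ * B.mulVec w i := by
          rw [hmv, hmv, Finset.mul_sum]
          exact Finset.sum_congr rfl fun j _ => by ring
        rw [h2]
        calc (r + ε) * ((∑ k, w k)⁻¹ * w i) = (∑ k, w k)⁻¹ * ((r + ε) * w i) := by ring
          _ ≤ (∑ k, w k)⁻¹ * B.mulVec w i :=
            mul_le_mul_of_nonneg_left (hεle i) (inv_nonneg.mpr hwsum.le)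
    have hle := hmax hmem
    simp only [Set.mem_setOf_eq] at hle
    have : r + ε ≤ r := hle
    linarith
  have hr0' : (0:ℝ) ≤ r := hr0
  have hpowz : ∀ m i, ((B ^ m) *ᵥ z) i = r ^ m * z i := by
    intro m
    induction m with
    | zero => intro i; simp [Matrix.one_mulVec]
    | succ m ih =>
      intro i
      have h1 : (B ^ (m+1)) *ᵥ z = B *ᵥ ((B ^ m) *ᵥ z) := by
        rw [Matrix.mulVec_mulVec, ← pow_succ']
      have hfz : ((B ^ m) *ᵥ z) = fun j => r ^ m * z j := funext ih
      rw [h1, hfz, hmv]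
      have h2 : ∀ j, B i j * (r ^ m * z j) = r ^ m * (B i j * z j) := fun j => by ring
      rw [Finset.sum_congr rfl fun j _ => h2 j, ← Finset.mul_sum, ← hmv, hBz i]
      ring
  have hzpos : ∀ i, 0 < z i := by
    intro i
    have h1 : 0 < (M *ᵥ z) i := hMz i
    rw [hMdef, hpowz mstar i] at h1
    by_contra h
    push_neg at h
    have : r ^ mstar * z i ≤ 0 :=
      mul_nonpos_iff.mpr (Or.inl ⟨pow_nonneg hr0' _, h⟩)
    linarith
  have heig : Matrix.vecMul z A = (r - c) • z := by
    funext j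
    have h1 := hbridge z j
    have h2 := hBz j
    simp only [Pi.smul_apply, smul_eq_mul]
    linarith
  have hθneg : r - c < 0 := by
    have hsumeq : (r - c) = ∑ i, z i * (∑ j, A i j) := by
      have h1 : ∀ j, (Matrix.vecMul z A) j = (r - c) * z j := fun j => by
        rw [heig]; simp
      have h2 : ∑ j, (Matrix.vecMul z A) j = (r - c) := by
        rw [Finset.sum_congr rfl fun j _ => h1 j, ← Finset.mul_sum, hzsum, mul_one]
      rw [← h2]
      have h3 : ∀ j, (Matrix.vecMul z A) j = ∑ i, z i * A i j := fun j => rfl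
      rw [Finset.sum_congr rfl fun j _ => h3 j, Finset.sum_comm]
      exact Finset.sum_congr rfl fun i _ => (Finset.mul_sum _ _ _).symm
    obtain ⟨i0, hi0⟩ := hsome
    rw [hsumeq]
    have h4 : ∑ i, z i * (∑ j, A i j) < ∑ i : T, (0:ℝ) := by
      refine Finset.sum_lt_sum
        (fun i _ => mul_nonpos_iff.mpr (Or.inl ⟨?_, ?_⟩))
        ⟨i0, Finset.mem_univ i0, mul_neg_of_pos_of_neg (hzpos i0) hi0⟩
      · exact (hzpos i).le
      · exact hrow i
    simpa using h4
  -- assemble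
  refine ⟨z, r - c, hzpos, hzsum, hθneg, heig, ?_⟩
  intro π' θ' hπ' hsum' heig'
  have hθeq : θ' = r - c :=
    le_antisymm (pf_comp hoff hπ' hzpos heig' heig) (pf_comp hoff hzpos hπ' heig heig')
  rw [hθeq] at heig'
  obtain ⟨i0, -, hi0⟩ := Finset.exists_min_image Finset.univ
    (fun i => π' i / z i) ⟨Classical.arbitrary T, Finset.mem_univ _⟩
  obtain ⟨s, hs⟩ : ∃ s, s = π' i0 / z i0 := ⟨_, rfl⟩
  rw [← hs] at hi0
  have hge : ∀ i, s * z i ≤ π' i := fun i =>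
    (le_div_iff₀ (hzpos i)).mp (hi0 i (Finset.mem_univ i))
  have hsi0 : π' i0 = s * z i0 := by rw [hs, div_mul_cancel₀ _ (hzpos i0).ne']
  have hall : ∀ k, π' k = s * z k := by
    intro k
    refine Relation.ReflTransGen.head_induction_on (hirr k i0) hsi0 ?_
    intro a b hab _ hb
    exact pf_step hoff heig heig' hge hb a hab.1 hab.2
  have hs1 : s = 1 := by
    have h5 : ∑ i, π' i = s * ∑ i, z i := by
      rw [Finset.mul_sum]; exact Finset.sum_congr rfl fun i _ => hall i
    rw [hsum', hzsum, mul_one] at h5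
    exact h5.symm
  exact ⟨funext fun i => by rw [hall i, hs1, one_mul], hθeq⟩
end
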